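/- Let L₀ > 0, ε > 0, δ ∈ (0, L₀), and let h_ε(z) = ((z/L₀)^{1/3} − 1) / (ε(1+z/ε)^{1/3}). Define u_ε(x) = ∫ₓ^δ exp[−∫₀^z h_ε(z') dz'] dz / ∫₀^δ exp[−∫₀^z h_ε(z') dz'] dz for 0 ≤ x ≤ δ. Then u_ε solves the boundary value problem ε(1+x/ε)^{1/3} u'' + ((x/L₀)^{1/3} − 1) u' = 0 on (0,δ) with u_ε(δ) = 0 and u_ε(0) = 1, and for δ = L₀/2 and each fixed δ' < δ, u_ε converges uniformly to 1 on [0,δ'] as ε → 0. -/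

import Mathlib

open Set Filter MeasureTheory intervalIntegral

noncomputable def hh (L0 ε t : ℝ) : ℝ :=
  ((t/L0) ^ ((1:ℝ)/3) - 1) / (ε * (1+t/ε) ^ ((1:ℝ)/3))

noncomputable def GG (L0 ε z : ℝ) : ℝ := ∫ t in (0:ℝ)..z, hh L0 ε t

noncomputable def ff (L0 ε z : ℝ) : ℝ := Real.exp (-(GG L0 ε z))

variable {L0 ε : ℝ}

lemma denom_pos (hε : 0 < ε) {t : ℝ} (ht : -ε < t) :
    0 < ε * (1+t/ε) ^ ((1:ℝ)/3) := by
  have h1 : 0 < 1 + t/ε := by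
    have := (div_lt_div_iff_of_pos_right hε).2 ht
    rw [neg_div, div_self hε.ne'] at this
    linarith
  exact mul_pos hε (Real.rpow_pos_of_pos h1 _)

lemma hh_contOn (hε : 0 < ε) : ContinuousOn (hh L0 ε) (Ioi (-ε)) := by
  apply ContinuousOn.div
  · apply Continuous.continuousOn
    exact ((continuous_id.div_const L0).rpow_const
      (fun x => Or.inr (by norm_num))).sub continuous_const
  · apply Continuous.continuousOn
    exact continuous_const.mul ((continuous_const.add (continuous_id.div_const ε)).rpow_const
      (fun x => Or.inr (by norm_num)))
  · exact fun t ht => (denom_pos hε ht).ne'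

lemma subset_Ioi (hε : 0 < ε) {a b : ℝ} (ha : -ε < a) (hb : -ε < b) :
    uIcc a b ⊆ Ioi (-ε) := fun x hx => lt_of_lt_of_le (lt_min ha hb) hx.1

lemma hh_intInt (hε : 0 < ε) {a b : ℝ} (ha : -ε < a) (hb : -ε < b) :
    IntervalIntegrable (hh L0 ε) volume a b :=
  ((hh_contOn hε).mono (subset_Ioi hε ha hb)).intervalIntegrable

lemma GG_hasDerivAt (hε : 0 < ε) {x : ℝ} (hx : -ε < x) :
    HasDerivAt (fun z => GG L0 ε z) (hh L0 ε x) x := by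
  have h0 : (-ε : ℝ) < 0 := by linarith
  exact integral_hasDerivAt_right (hh_intInt hε h0 hx)
    ((hh_contOn hε).stronglyMeasurableAtFilter isOpen_Ioi x hx)
    ((hh_contOn hε).continuousAt (isOpen_Ioi.mem_nhds hx))

lemma ff_contAt (hε : 0 < ε) {x : ℝ} (hx : -ε < x) :
    ContinuousAt (ff L0 ε) x :=
  Real.continuous_exp.continuousAt.comp ((GG_hasDerivAt hε hx).continuousAt.neg)

lemma ff_contOn (hε : 0 < ε) : ContinuousOn (ff L0 ε) (Ioi (-ε)) :=
  fun x hx => (ff_contAt hε hx).continuousWithinAt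

lemma ff_intInt (hε : 0 < ε) {a b : ℝ} (ha : -ε < a) (hb : -ε < b) :
    IntervalIntegrable (ff L0 ε) volume a b :=
  ((ff_contOn hε).mono (subset_Ioi hε ha hb)).intervalIntegrable

lemma ff_pos (z : ℝ) : 0 < ff L0 ε z := Real.exp_pos _

lemma D_pos (hε : 0 < ε) {δ : ℝ} (hδ : 0 < δ) :
    0 < ∫ z in (0:ℝ)..δ, ff L0 ε z :=
  intervalIntegral_pos_of_pos (ff_intInt hε (by linarith) (by linarith)) ff_pos hδ

lemma N_hasDerivAt (hε : 0 < ε) {δ x : ℝ} (hδ : -ε < δ) (hx : -ε < x) :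
    HasDerivAt (fun y => ∫ z in y..δ, ff L0 ε z) (-(ff L0 ε x)) x :=
  integral_hasDerivAt_left (ff_intInt hε hx hδ)
    ((ff_contOn hε).stronglyMeasurableAtFilter isOpen_Ioi x hx)
    (ff_contAt hε hx)

lemma GG_sub (hε : 0 < ε) {a b : ℝ} (ha : -ε < a) (hb : -ε < b) :
    GG L0 ε b - GG L0 ε a = ∫ t in a..b, hh L0 ε t := by
  have h0 : (-ε : ℝ) < 0 := by linarith
  exact integral_interval_sub_left (hh_intInt hε h0 hb) (hh_intInt hε h0 ha)

lemma hh_nonpos (hL0 : 0 < L0) (hε : 0 < ε) {t : ℝ} (ht : 0 ≤ t) (ht2 : t ≤ L0/2) :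
    hh L0 ε t ≤ 0 := by
  apply div_nonpos_of_nonpos_of_nonneg
  · have h1 : (t/L0) ^ ((1:ℝ)/3) < 1 := by
      apply Real.rpow_lt_one (by positivity)
      · rw [div_lt_one hL0]; linarith
      · norm_num
    linarith
  · exact (denom_pos hε (by linarith)).le

lemma GG_antitone (hL0 : 0 < L0) (hε : 0 < ε) {a b : ℝ} (h0 : 0 ≤ a) (hab : a ≤ b)
    (hb : b ≤ L0/2) : GG L0 ε b ≤ GG L0 ε a := by
  have h := GG_sub (L0 := L0) hε (show -ε < a by linarith) (show -ε < b by linarith)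
  have hint : ∫ t in a..b, hh L0 ε t ≤ ∫ t in a..b, (0:ℝ) := by
    apply integral_mono_on hab (hh_intInt hε (by linarith) (by linarith))
      intervalIntegrable_const
    intro t ht
    exact hh_nonpos hL0 hε (le_trans h0 ht.1) (le_trans ht.2 hb)
  simp only [intervalIntegral.integral_const, smul_zero] at hint
  linarith

lemma ff_mono (hL0 : 0 < L0) (hε : 0 < ε) {a b : ℝ} (h0 : 0 ≤ a) (hab : a ≤ b)
    (hb : b ≤ L0/2) : ff L0 ε a ≤ ff L0 ε b :=
  Real.exp_le_exp.2 (neg_le_neg (GG_antitone hL0 hε h0 hab hb))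


lemma Qeq {δ ε : ℝ} (hδ : 0 < δ) (hε : 0 < ε) :
    ε * (1 + δ/ε) ^ ((1:ℝ)/3) = ε ^ ((2:ℝ)/3) * (ε + δ) ^ ((1:ℝ)/3) := by
  have h1 : 1 + δ/ε = (ε + δ)/ε := by field_simp
  have h2 : ε ^ ((2:ℝ)/3) = ε / ε ^ ((1:ℝ)/3) := by
    rw [show (2:ℝ)/3 = 1 - 1/3 by norm_num, Real.rpow_sub hε, Real.rpow_one]
  rw [h1, Real.div_rpow (by linarith) hε.le, h2]
  ring

set_option maxHeartbeats 1000000 in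
lemma Bto0 {L0 : ℝ} (hL0 : 0 < L0) {δ' : ℝ} (h0 : 0 ≤ δ') (h1 : δ' < L0/2) :
    Tendsto (fun ε => (δ' / ((L0/2 - δ')/2)) * Real.exp (-(((L0/2 - δ')/2) *
        (1 - (1/2:ℝ) ^ ((1:ℝ)/3)) / (ε * (1 + (L0/2)/ε) ^ ((1:ℝ)/3)))))
      (nhdsWithin 0 (Ioi 0)) (nhds 0) := by
  set δ : ℝ := L0/2 with hδdef
  have hδpos : 0 < δ := by rw [hδdef]; linarith
  set r : ℝ := (δ - δ')/2 with hrdef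
  have hrpos : 0 < r := by rw [hrdef]; linarith
  set c : ℝ := 1 - (1/2:ℝ) ^ ((1:ℝ)/3) with hcdef
  have hc : 0 < c := by
    have : (1/2:ℝ) ^ ((1:ℝ)/3) < 1 := Real.rpow_lt_one (by norm_num) (by norm_num) (by norm_num)
    rw [hcdef]; linarith
  have hT : Tendsto (fun ε : ℝ => ε ^ ((2:ℝ)/3) * (ε + δ) ^ ((1:ℝ)/3)) (nhds 0) (nhds 0) := by
    have c1 : ContinuousAt (fun ε : ℝ => ε ^ ((2:ℝ)/3)) 0 :=
      Real.continuousAt_rpow_const 0 _ (Or.inr (by norm_num))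
    have c2 : ContinuousAt (fun ε : ℝ => (ε + δ) ^ ((1:ℝ)/3)) 0 :=
      ((continuous_add_right δ).continuousAt).rpow_const (Or.inr (by norm_num))
    have := c1.mul c2
    have hval : (fun ε : ℝ => ε ^ ((2:ℝ)/3) * (ε + δ) ^ ((1:ℝ)/3)) 0 = 0 := by
      simp [Real.zero_rpow (by norm_num : ((2:ℝ)/3) ≠ 0)]
    have h' : Tendsto (fun ε : ℝ => ε ^ ((2:ℝ)/3) * (ε + δ) ^ ((1:ℝ)/3)) (nhds 0)
        (nhds ((fun ε : ℝ => ε ^ ((2:ℝ)/3) * (ε + δ) ^ ((1:ℝ)/3)) 0)) := this.tendsto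
    rwa [hval] at h'
  have hQ0 : Tendsto (fun ε : ℝ => ε * (1 + δ/ε) ^ ((1:ℝ)/3)) (nhdsWithin 0 (Ioi 0)) (nhds 0) := by
    apply (hT.mono_left nhdsWithin_le_nhds).congr'
    filter_upwards [self_mem_nhdsWithin] with ε (hε : 0 < ε)
    exact (Qeq hδpos hε).symm
  have hQ : Tendsto (fun ε : ℝ => ε * (1 + δ/ε) ^ ((1:ℝ)/3)) (nhdsWithin 0 (Ioi 0))
      (nhdsWithin 0 (Ioi 0)) := by
    refine tendsto_nhdsWithin_iff.2 ⟨hQ0, ?_⟩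
    filter_upwards [self_mem_nhdsWithin] with ε (hε : 0 < ε)
    have h15 : 0 < 1 + δ/ε := by positivity
    exact mul_pos hε (Real.rpow_pos_of_pos h15 _)
  have hm : Tendsto (fun ε : ℝ => r * c / (ε * (1 + δ/ε) ^ ((1:ℝ)/3)))
      (nhdsWithin 0 (Ioi 0)) atTop := by
    have hinv : Tendsto (fun ε : ℝ => (ε * (1 + δ/ε) ^ ((1:ℝ)/3))⁻¹)
        (nhdsWithin 0 (Ioi 0)) atTop := tendsto_inv_nhdsGT_zero.comp hQ
    have := hinv.const_mul_atTop (mul_pos hrpos hc)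
    simpa [div_eq_mul_inv] using this
  have hexp : Tendsto (fun ε : ℝ => Real.exp (-(r * c / (ε * (1 + δ/ε) ^ ((1:ℝ)/3)))))
      (nhdsWithin 0 (Ioi 0)) (nhds 0) :=
    Real.tendsto_exp_atBot.comp (tendsto_neg_atTop_atBot.comp hm)
  have := hexp.const_mul (δ' / r)
  simpa [mul_zero] using this


lemma key (hL0 : 0 < L0) (hε : 0 < ε) {δ' x : ℝ} (h0 : 0 ≤ δ') (h1 : δ' < L0/2)
    (hx : x ∈ Icc 0 δ') :
    |1 - (∫ z in x..(L0/2), ff L0 ε z) / (∫ z in (0:ℝ)..(L0/2), ff L0 ε z)| ≤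
      (δ' / ((L0/2 - δ')/2)) * Real.exp (-(((L0/2 - δ')/2) * (1 - (1/2:ℝ) ^ ((1:ℝ)/3)) /
        (ε * (1 + (L0/2)/ε) ^ ((1:ℝ)/3)))) := by
  set δ : ℝ := L0/2 with hδdef
  set r : ℝ := (δ - δ')/2 with hrdef
  set δ'' : ℝ := δ' + r with hδ''def
  set c : ℝ := 1 - (1/2:ℝ) ^ ((1:ℝ)/3) with hcdef
  set Q : ℝ := ε * (1 + δ/ε) ^ ((1:ℝ)/3) with hQdef
  have hδpos : 0 < δ := by rw [hδdef]; linarith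
  have hrpos : 0 < r := by rw [hrdef]; linarith
  have hc : 0 < c := by
    have : (1/2:ℝ) ^ ((1:ℝ)/3) < 1 := Real.rpow_lt_one (by norm_num) (by norm_num) (by norm_num)
    rw [hcdef]; linarith
  have hQpos : 0 < Q := denom_pos hε (by linarith)
  obtain ⟨hx0, hxδ'⟩ := hx
  have hxδ : x ≤ δ := by linarith
  have hδ''δ : δ'' ≤ δ := by rw [hδ''def, hrdef]; linarith
  have hδ'δ'' : δ' ≤ δ'' := by rw [hδ''def]; linarith
  -- notation
  set D : ℝ := ∫ z in (0:ℝ)..δ, ff L0 ε z with hDdef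
  have hD : 0 < D := D_pos hε hδpos
  have ii : ∀ a b : ℝ, 0 ≤ a → 0 ≤ b → IntervalIntegrable (ff L0 ε) volume a b :=
    fun a b ha hb => ff_intInt hε (by linarith) (by linarith)
  -- rewrite 1 - u as (∫ 0..x) / D
  have hsplit : (∫ z in (0:ℝ)..x, ff L0 ε z) + (∫ z in x..δ, ff L0 ε z) = D :=
    integral_add_adjacent_intervals (ii 0 x le_rfl hx0) (ii x δ hx0 hδpos.le)
  have habs : |1 - (∫ z in x..δ, ff L0 ε z) / D| = (∫ z in (0:ℝ)..x, ff L0 ε z) / D := by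
    have h2 : 1 - (∫ z in x..δ, ff L0 ε z) / D = (∫ z in (0:ℝ)..x, ff L0 ε z) / D := by
      field_simp
      linarith
    rw [h2, abs_of_nonneg]
    apply div_nonneg _ hD.le
    exact integral_nonneg hx0 (fun t _ => (ff_pos t).le)
  rw [habs]
  -- numerator bounds
  have hnum1 : (∫ z in (0:ℝ)..x, ff L0 ε z) ≤ ∫ z in (0:ℝ)..δ', ff L0 ε z := by
    have := integral_add_adjacent_intervals (ii 0 x le_rfl hx0) (ii x δ' hx0 h0)
    have hpos : 0 ≤ ∫ z in x..δ', ff L0 ε z :=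
      integral_nonneg hxδ' (fun t _ => (ff_pos t).le)
    linarith
  have hnum2 : (∫ z in (0:ℝ)..δ', ff L0 ε z) ≤ δ' * ff L0 ε δ' := by
    have h := integral_mono_on (μ := volume) h0 (ii 0 δ' le_rfl h0)
      intervalIntegrable_const
      (fun t ht => ff_mono hL0 hε ht.1 ht.2 (by linarith))
    rwa [intervalIntegral.integral_const, sub_zero, smul_eq_mul] at h
  -- denominator bound
  have hden : r * ff L0 ε δ'' ≤ D := by
    have hs : (∫ z in (0:ℝ)..δ'', ff L0 ε z) + (∫ z in δ''..δ, ff L0 ε z) = D :=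
      integral_add_adjacent_intervals (ii 0 δ'' le_rfl (by linarith))
        (ii δ'' δ (by linarith) hδpos.le)
    have h1' : 0 ≤ ∫ z in (0:ℝ)..δ'', ff L0 ε z :=
      integral_nonneg (by linarith) (fun t _ => (ff_pos t).le)
    have h2' : r * ff L0  ε δ'' ≤ ∫ z in δ''..δ, ff L0 ε z := by
      have h := integral_mono_on (μ := volume) hδ''δ intervalIntegrable_const
        (ii δ'' δ (by linarith) hδpos.le)
        (fun t ht => ff_mono hL0 hε (by linarith [ht.1]) ht.1 (by linarith [ht.2]))
      rw [intervalIntegral.integral_const, smul_eq_mul] at h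
      have he2 : δ - δ'' = r := by rw [hδ''def, hrdef]; ring
      rw [he2] at h
      exact h
    linarith
  -- ratio bound
  have hstep : (∫ z in (0:ℝ)..x, ff L0 ε z) / D ≤ (δ' * ff L0 ε δ') / (r * ff L0 ε δ'') := by
    exact div_le_div₀ (mul_nonneg h0 (ff_pos _).le) (hnum1.trans hnum2)
      (mul_pos hrpos (ff_pos _)) hden
  -- exponential bound
  have hGG : GG L0 ε δ'' - GG L0 ε δ' ≤ -(r * c / Q) := by
    rw [GG_sub hε (by linarith) (by linarith)]
    have hbd : ∀ t ∈ Icc δ' δ'', hh L0 ε t ≤ -c / Q := by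
      intro t ht
      have ht0 : 0 ≤ t := le_trans h0 ht.1
      have htδ : t ≤ δ := le_trans ht.2 hδ''δ
      have hPpos : 0 < ε * (1 + t/ε) ^ ((1:ℝ)/3) := denom_pos hε (by linarith)
      have hPQ : ε * (1 + t/ε) ^ ((1:ℝ)/3) ≤ Q := by
        rw [hQdef]
        apply mul_le_mul_of_nonneg_left _ hε.le
        have h15 : 1 + t/ε ≤ 1 + δ/ε := by gcongr
        exact Real.rpow_le_rpow (by linarith [div_nonneg ht0 hε.le]) h15 (by norm_num)
      have hN : (t/L0) ^ ((1:ℝ)/3) - 1 ≤ -c := by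
        have : (t/L0) ^ ((1:ℝ)/3) ≤ (1/2:ℝ) ^ ((1:ℝ)/3) := by
          apply Real.rpow_le_rpow (div_nonneg ht0 hL0.le) _ (by norm_num)
          rw [div_le_div_iff₀ hL0 (by norm_num : (0:ℝ) < 2)]
          rw [hδdef] at htδ
          linarith
        rw [hcdef]; linarith
      calc hh L0 ε t ≤ (-c) / (ε * (1 + t/ε) ^ ((1:ℝ)/3)) := by
            rw [hh]
            exact (div_le_div_iff_of_pos_right hPpos).2 hN
        _ ≤ (-c) / Q := by
            rw [neg_div, neg_div, neg_le_neg_iff]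
            exact div_le_div_of_nonneg_left hc.le hPpos hPQ
    have h := integral_mono_on (μ := volume) hδ'δ'' (hh_intInt hε (by linarith) (by linarith))
      intervalIntegrable_const hbd
    rw [intervalIntegral.integral_const, smul_eq_mul] at h
    have he : δ'' - δ' = r := by rw [hδ''def]; ring
    rw [he] at h
    calc (∫ t in δ'..δ'', hh L0 ε t) ≤ r * (-c / Q) := h
      _ = -(r * c / Q) := by ring
  have hratio : (δ' * ff L0 ε δ') / (r * ff L0 ε δ'') ≤ (δ' / r) * Real.exp (-(r * c / Q)) := by
    have hexp : ff L0 ε δ' / ff L0 ε δ'' = Real.exp (GG L0 ε δ'' - GG L0 ε δ') := by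
      rw [ff, ff, ← Real.exp_sub]
      ring_nf
    calc (δ' * ff L0 ε δ') / (r * ff L0 ε δ'')
        = (δ' / r) * (ff L0 ε δ' / ff L0 ε δ'') := by rw [div_mul_div_comm]
      _ = (δ' / r) * Real.exp (GG L0 ε δ'' - GG L0 ε δ') := by rw [hexp]
      _ ≤ (δ' / r) * Real.exp (-(r * c / Q)) := by
          apply mul_le_mul_of_nonneg_left _ (by positivity)
          exact Real.exp_le_exp.2 hGG
  calc (∫ z in (0:ℝ)..x, ff L0 ε z) / D ≤ (δ' * ff L0 ε δ') / (r * ff L0 ε δ'') := hstep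
    _ ≤ (δ' / r) * Real.exp (-(r * c / Q)) := hratio



theorem stmt_5 (L0 : ℝ) (hL0 : 0 < L0)
    (u : ℝ → ℝ → ℝ → ℝ)
    (hu : ∀ ε δ x, u ε δ x =
      (∫ z in x..δ, Real.exp (-(∫ t in (0:ℝ)..z,
          ((t/L0) ^ ((1:ℝ)/3) - 1) / (ε * (1+t/ε) ^ ((1:ℝ)/3))))) /
      (∫ z in (0:ℝ)..δ, Real.exp (-(∫ t in (0:ℝ)..z,
          ((t/L0) ^ ((1:ℝ)/3) - 1) / (ε * (1+t/ε) ^ ((1:ℝ)/3)))))) :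
    (∀ ε > (0:ℝ), ∀ δ ∈ Ioo (0:ℝ) L0,
      u ε δ δ = 0 ∧ u ε δ 0 = 1 ∧
      ∀ x ∈ Ioo (0:ℝ) δ,
        ε * (1+x/ε) ^ ((1:ℝ)/3) * deriv (deriv (u ε δ)) x
          + ((x/L0) ^ ((1:ℝ)/3) - 1) * deriv (u ε δ) x = 0) ∧
    (∀ δ' ∈ Ico (0:ℝ) (L0/2),
      TendstoUniformlyOn (fun ε x => u ε (L0/2) x) (fun _ => 1)
        (nhdsWithin 0 (Ioi 0)) (Icc 0 δ')) := by
  constructor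
  · intro ε hε δ hδ
    have hu' : u ε δ = fun x => (∫ z in x..δ, ff L0 ε z) / (∫ z in (0:ℝ)..δ, ff L0 ε z) := by
      funext x; rw [hu ε δ x]; rfl
    have hD : 0 < ∫ z in (0:ℝ)..δ, ff L0 ε z := D_pos hε hδ.1
    set D : ℝ := ∫ z in (0:ℝ)..δ, ff L0 ε z with hDdef
    have hδε : -ε < δ := by linarith [hδ.1]
    refine ⟨?_, ?_, ?_⟩
    · rw [hu']; simp
    · rw [hu']
      show D / D = 1
      exact div_self hD.ne'
    · intro x hx
      have hxε : -ε < x := by linarith [hx.1]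
      have huderiv : ∀ y, -ε < y → HasDerivAt (u ε δ) (-(ff L0 ε y)/D) y := by
        intro y hy
        rw [hu']
        exact (N_hasDerivAt hε hδε hy).div_const D
      have h1 : deriv (u ε δ) x = -(ff L0 ε x)/D := (huderiv x hxε).deriv
      have heq : deriv (u ε δ) =ᶠ[nhds x] fun y => -(ff L0 ε y)/D := by
        filter_upwards [isOpen_Ioi.mem_nhds hxε] with y hy
        exact (huderiv y hy).deriv
      have hffd : HasDerivAt (ff L0 ε) (ff L0 ε x * -(hh L0 ε x)) x := by
        have := ((GG_hasDerivAt (L0 := L0) hε hxε).neg).exp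
        exact this
      have h2 : deriv (deriv (u ε δ)) x = ff L0 ε x * hh L0 ε x / D := by
        rw [heq.deriv_eq]
        have : HasDerivAt (fun y => -(ff L0 ε y)/D) (-(ff L0 ε x * -(hh L0 ε x))/D) x :=
          (hffd.neg).div_const D
        rw [this.deriv]; ring
      rw [h1, h2]
      simp only [hh]
      have hP : ε * (1+x/ε) ^ ((1:ℝ)/3) ≠ 0 := (denom_pos hε hxε).ne'
      have hD' : D ≠ 0 := hD.ne'
      set P := ε * (1+x/ε) ^ ((1:ℝ)/3) with hPdef
      set N := (x/L0) ^ ((1:ℝ)/3) - 1 with hNdef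
      field_simp
      ring
  · intro δ' hδ'
    rw [Metric.tendstoUniformlyOn_iff]
    intro η hη
    have hB := (Bto0 hL0 hδ'.1 hδ'.2).eventually_lt_const hη
    filter_upwards [hB, self_mem_nhdsWithin] with ε hBε (hεpos : 0 < ε)
    intro x hx
    rw [hu, Real.dist_eq]
    have hk := key hL0 hεpos hδ'.1 hδ'.2 hx
    calc |1 - (∫ z in x..(L0/2), Real.exp (-(∫ t in (0:ℝ)..z,
          ((t/L0) ^ ((1:ℝ)/3) - 1) / (ε * (1+t/ε) ^ ((1:ℝ)/3))))) /
      (∫ z in (0:ℝ)..(L0/2), Real.exp (-(∫ t in (0:ℝ)..z,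
          ((t/L0) ^ ((1:ℝ)/3) - 1) / (ε * (1+t/ε) ^ ((1:ℝ)/3)))))|
        ≤ (δ' / ((L0/2 - δ')/2)) * Real.exp (-(((L0/2 - δ')/2) * (1 - (1/2:ℝ) ^ ((1:ℝ)/3)) /
            (ε * (1 + (L0/2)/ε) ^ ((1:ℝ)/3)))) := hk
      _ < η := hBε
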